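/- On the elliptic curve E_α : Y² + (α−2)XY + αY = X³ with the rational functions x = (X−Y)/(X−α) and y = (Y+(α−1)X+α)/(X−α), the divisors are (x) = (2P)+(3P)−(5P)−(O) and (y) = −(P)+(3P)+(4P)−(O), where P = (α,α) generates the 6-torsion. -/

import Mathlib

open WeierstrassCurve WeierstrassCurve.Affine WeierstrassCurve.Affine.CoordinateRing Polynomial

private lemma spanSingleton_div_mul {R K : Type*} [CommRing R] [IsDomain R] [Field K]
    [Algebra R K] [IsFractionRing R K] {n d : R} (hd : d ≠ 0)
    {I J : Ideal R} (key : Ideal.span {n} * I = Ideal.span {d} * J) :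
    FractionalIdeal.spanSingleton (nonZeroDivisors R)
        (algebraMap R K n / algebraMap R K d) * (I : FractionalIdeal (nonZeroDivisors R) K) =
      (J : FractionalIdeal (nonZeroDivisors R) K) := by
  have hd' : algebraMap R K d ≠ 0 :=
    (map_ne_zero_iff _ (IsFractionRing.injective R K)).mpr hd
  have h1 : FractionalIdeal.spanSingleton (nonZeroDivisors R) ((algebraMap R K d)⁻¹) *
      FractionalIdeal.spanSingleton (nonZeroDivisors R) (algebraMap R K d) = 1 := by
    rw [FractionalIdeal.spanSingleton_mul_spanSingleton, inv_mul_cancel₀ hd',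
      FractionalIdeal.spanSingleton_one]
  have key' : FractionalIdeal.spanSingleton (nonZeroDivisors R) (algebraMap R K n) *
      (I : FractionalIdeal (nonZeroDivisors R) K) =
      FractionalIdeal.spanSingleton (nonZeroDivisors R) (algebraMap R K d) *
        (J : FractionalIdeal (nonZeroDivisors R) K) := by
    rw [← FractionalIdeal.coeIdeal_span_singleton, ← FractionalIdeal.coeIdeal_span_singleton,
      ← FractionalIdeal.coeIdeal_mul, ← FractionalIdeal.coeIdeal_mul, key]
  calc FractionalIdeal.spanSingleton (nonZeroDivisors R)
        (algebraMap R K n / algebraMap R K d) * (I : FractionalIdeal (nonZeroDivisors R) K)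
      = FractionalIdeal.spanSingleton (nonZeroDivisors R) ((algebraMap R K d)⁻¹) *
          (FractionalIdeal.spanSingleton (nonZeroDivisors R) (algebraMap R K n) *
            (I : FractionalIdeal (nonZeroDivisors R) K)) := by
        rw [← mul_assoc, FractionalIdeal.spanSingleton_mul_spanSingleton, div_eq_mul_inv,
          mul_comm (algebraMap R K n)]
    _ = FractionalIdeal.spanSingleton (nonZeroDivisors R) ((algebraMap R K d)⁻¹) *
          (FractionalIdeal.spanSingleton (nonZeroDivisors R) (algebraMap R K d) *
            (J : FractionalIdeal (nonZeroDivisors R) K)) := by rw [key']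
    _ = (J : FractionalIdeal (nonZeroDivisors R) K) := by rw [← mul_assoc, h1, one_mul]

/-- On `E_α : Y² + (α−2)XY + αY = X³` with `x = (X−Y)/(X−α)` and `y = (Y+(α−1)X+α)/(X−α)`,
the divisors are `(x) = (2P)+(3P)−(5P)−(O)` and `(y) = −(P)+(3P)+(4P)−(O)`, where
`P = (α,α)`, `2P = (0,0)`, `3P = (−1,−1)`, `4P = (0,−α)`, `5P = (α,−α²)`.  Formulated as an
identity of fractional ideals of the affine coordinate ring (the contribution at the point at
infinity `O` being accounted for by degrees): `(x)·M_{5P} = M_{2P}·M_{3P}` and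
`(y)·M_P = M_{3P}·M_{4P}`, where `M_Q` is the maximal ideal of the affine point `Q`. -/
theorem divisors_of_x_and_y (α : ℚ) (hα0 : α ≠ 0) (hα1 : α ≠ -1)
    (W : WeierstrassCurve.Affine ℚ)
    (hW : W = { a₁ := α - 2, a₂ := 0, a₃ := α, a₄ := 0, a₆ := 0 }) :
    (FractionalIdeal.spanSingleton (nonZeroDivisors W.CoordinateRing)
        ((algebraMap W.CoordinateRing (FractionRing W.CoordinateRing)
            (WeierstrassCurve.Affine.CoordinateRing.mk W
              ((C (X : ℚ[X]) - X : Polynomial (Polynomial ℚ))))) /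
          (algebraMap W.CoordinateRing (FractionRing W.CoordinateRing)
            (WeierstrassCurve.Affine.CoordinateRing.mk W
              ((C ((X : ℚ[X]) - C α) : Polynomial (Polynomial ℚ)))))) *
        (XYIdeal W α (C (-α ^ 2)) :
          FractionalIdeal (nonZeroDivisors W.CoordinateRing) (FractionRing W.CoordinateRing)) =
      (XYIdeal W 0 (C 0) :
          FractionalIdeal (nonZeroDivisors W.CoordinateRing) (FractionRing W.CoordinateRing)) *
        (XYIdeal W (-1) (C (-1)) :
          FractionalIdeal (nonZeroDivisors W.CoordinateRing) (FractionRing W.CoordinateRing))) ∧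
    (FractionalIdeal.spanSingleton (nonZeroDivisors W.CoordinateRing)
        ((algebraMap W.CoordinateRing (FractionRing W.CoordinateRing)
            (WeierstrassCurve.Affine.CoordinateRing.mk W
              ((X + C (C (α - 1) * X + C α) : Polynomial (Polynomial ℚ))))) /
          (algebraMap W.CoordinateRing (FractionRing W.CoordinateRing)
            (WeierstrassCurve.Affine.CoordinateRing.mk W
              ((C ((X : ℚ[X]) - C α) : Polynomial (Polynomial ℚ)))))) *
        (XYIdeal W α (C α) :
          FractionalIdeal (nonZeroDivisors W.CoordinateRing) (FractionRing W.CoordinateRing)) =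
      (XYIdeal W (-1) (C (-1)) :
          FractionalIdeal (nonZeroDivisors W.CoordinateRing) (FractionRing W.CoordinateRing)) *
        (XYIdeal W 0 (C (-α)) :
          FractionalIdeal (nonZeroDivisors W.CoordinateRing) (FractionRing W.CoordinateRing))) := by
  subst hW
  set W : WeierstrassCurve.Affine ℚ :=
    { a₁ := α - 2, a₂ := 0, a₃ := α, a₄ := 0, a₆ := 0 } with hW
  have hd : WeierstrassCurve.Affine.CoordinateRing.mk W
      ((C ((X : ℚ[X]) - C α) : Polynomial (Polynomial ℚ))) ≠ 0 := XClass_ne_zero (W' := W) α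
  constructor
  · -- (x) conjunct
    have h₁ : W.Equation 0 0 := by rw [equation_iff]; simp [hW]
    have h₂ : W.Equation (-1) (-1) := by rw [equation_iff]; simp [hW]; ring
    have hs : W.slope 0 (-1) 0 (-1) = 1 := by
      rw [slope_of_X_ne (by norm_num)]; norm_num
    have hx : W.addX 0 (-1) 1 = α := by simp [hW]; ring
    have hy : W.addY 0 (-1) 0 1 = -α ^ 2 := by
      simp only [addY, negAddY, negY, hx]; simp only [hW]; ring
    have hl : linePolynomial (0 : ℚ) 0 1 = X := by simp [linePolynomial]
    have key := XYIdeal_mul_XYIdeal h₁ h₂ (fun h => by norm_num at h)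
    rw [hs, hx, hy, hl] at key
    rw [← FractionalIdeal.coeIdeal_mul]
    refine spanSingleton_div_mul hd ?_
    have hn : Ideal.span {WeierstrassCurve.Affine.CoordinateRing.mk W
        ((C (X : ℚ[X]) - X : Polynomial (Polynomial ℚ)))} = YIdeal W X := by
      rw [YIdeal, YClass, show ((C (X : ℚ[X]) - X : Polynomial (Polynomial ℚ)))
        = -(X - C (X : ℚ[X])) from (neg_sub _ _).symm, map_neg, Ideal.span_singleton_neg]
    rw [hn, ← key]
    rfl
  · -- (y) conjunct
    have h₁ : W.Equation (-1) (-1) := by rw [equation_iff]; simp [hW]; ring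
    have h₂ : W.Equation 0 (-α) := by rw [equation_iff]; simp [hW]; ring
    have hs : W.slope (-1) 0 (-1) (-α) = 1 - α := by
      rw [slope_of_X_ne (by norm_num)]; field_simp; ring
    have hx : W.addX (-1) 0 (1 - α) = α := by simp [hW]; ring
    have hy : W.addY (-1) 0 (-1) (1 - α) = α := by
      simp only [addY, negAddY, negY, hx]; simp only [hW]; ring
    have key := XYIdeal_mul_XYIdeal h₁ h₂ (fun h => by norm_num at h)
    rw [hs, hx, hy] at key
    rw [← FractionalIdeal.coeIdeal_mul]
    refine spanSingleton_div_mul hd ?_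
    have hn : Ideal.span {WeierstrassCurve.Affine.CoordinateRing.mk W
        ((X + C (C (α - 1) * X + C α) : Polynomial (Polynomial ℚ)))}
        = YIdeal W (linePolynomial (-1) (-1) (1 - α)) := by
      rw [YIdeal, YClass, linePolynomial]
      have harg : (C (1 - α) * (X - C (-1)) + C (-1) : ℚ[X]) = -(C (α - 1) * X + C α) := by
        simp only [C_sub, C_neg, C_add, C_mul, C_1]; ring
      rw [harg, map_neg, sub_neg_eq_add]
    rw [hn, ← key]
    rfl
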